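/- Let X_1,...,X_n be {0,1}-valued random variables with E[X_i] = x_i that are negatively correlated in the sense that for every T ⊆ [n], E[∏_{i∈T} X_i] ≤ ∏_{i∈T} x_i and E[∏_{i∈T}(1-X_i)] ≤ ∏_{i∈T}(1-x_i). Let a_i ∈ [0,1], X = ∑ a_i X_i, and μ ≥ ∑ a_i x_i. Then for any δ ≥ 0, Pr[X ≥ (1+δ)μ] ≤ (e^δ/(1+δ)^{1+δ})^μ. -/

import Mathlib

open MeasureTheory Finset

theorem stmt_13 {Ω : Type*} [MeasurableSpace Ω] (P : Measure Ω) [IsProbabilityMeasure P]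
    {n : ℕ} (X : Fin n → Ω → ℝ) (x : Fin n → ℝ)
    (hmeas : ∀ i, Measurable (X i))
    (h01 : ∀ i ω, X i ω = 0 ∨ X i ω = 1)
    (hmean : ∀ i, ∫ ω, X i ω ∂P = x i)
    (hneg : ∀ T : Finset (Fin n), ∫ ω, ∏ i ∈ T, X i ω ∂P ≤ ∏ i ∈ T, x i)
    (hneg' : ∀ T : Finset (Fin n),
      ∫ ω, ∏ i ∈ T, (1 - X i ω) ∂P ≤ ∏ i ∈ T, (1 - x i))
    (a : Fin n → ℝ) (ha : ∀ i, a i ∈ Set.Icc (0:ℝ) 1)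
    (m : ℝ) (hm : ∑ i, a i * x i ≤ m)
    (δ : ℝ) (hδ : 0 ≤ δ) :
    (P {ω | (1 + δ) * m ≤ ∑ i, a i * X i ω}).toReal
      ≤ (Real.exp δ / (1 + δ) ^ (1 + δ)) ^ m := by
  have h1δ : (0:ℝ) < 1 + δ := by linarith
  set l := Real.log (1 + δ) with hl
  have hlnn : 0 ≤ l := Real.log_nonneg (by linarith)
  have hexpl : Real.exp l = 1 + δ := Real.exp_log h1δ
  set c : Fin n → ℝ := fun i => Real.exp (l * a i) - 1 with hc
  have hcnn : ∀ i, 0 ≤ c i := by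
    intro i
    have h := Real.one_le_exp (mul_nonneg hlnn (ha i).1)
    simp only [hc]
    linarith
  have hXnn : ∀ i ω, 0 ≤ X i ω := by
    intro i ω; rcases h01 i ω with h | h <;> simp [h]
  have hXle : ∀ i ω, X i ω ≤ 1 := by
    intro i ω; rcases h01 i ω with h | h <;> simp [h]
  have hxnn : ∀ i, 0 ≤ x i := fun i => (hmean i) ▸ integral_nonneg (fun ω => hXnn i ω)
  have hcle : ∀ i, c i ≤ δ * a i := by
    intro i
    have hcv : Real.exp (a i * l + (1 - a i) * 0) ≤
        a i * Real.exp l + (1 - a i) * Real.exp 0 :=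
      convexOn_exp.2 (Set.mem_univ l) (Set.mem_univ (0:ℝ))
        (ha i).1 (by linarith [(ha i).2]) (by ring)
    simp only [mul_zero, add_zero, Real.exp_zero, mul_one, hexpl] at hcv
    simp only [hc]
    have : l * a i = a i * l := mul_comm _ _
    rw [this]
    nlinarith [hcv]
  have hmeasprod : ∀ T : Finset (Fin n), Measurable (fun ω => ∏ i ∈ T, X i ω) :=
    fun T => Finset.measurable_prod T (fun i _ => hmeas i)
  have hintprod : ∀ T : Finset (Fin n), Integrable (fun ω => ∏ i ∈ T, X i ω) P := by
    intro T
    refine (integrable_const (1:ℝ)).mono' (hmeasprod T).aestronglyMeasurable ?_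
    refine Filter.Eventually.of_forall fun ω => ?_
    rw [Real.norm_eq_abs, abs_of_nonneg (Finset.prod_nonneg fun i _ => hXnn i ω)]
    exact Finset.prod_le_one (fun i _ => hXnn i ω) (fun i _ => hXle i ω)
  have hpt : ∀ ω, Real.exp (l * ∑ i, a i * X i ω)
      = ∑ T ∈ (Finset.univ : Finset (Fin n)).powerset,
          (∏ i ∈ T, c i) * ∏ i ∈ T, X i ω := by
    intro ω
    have h1 : Real.exp (l * ∑ i, a i * X i ω) = ∏ i, (c i * X i ω + 1) := by
      rw [Finset.mul_sum, Real.exp_sum]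
      refine Finset.prod_congr rfl fun i _ => ?_
      rcases h01 i ω with h | h <;> simp [h, hc]
    rw [h1, Finset.prod_add]
    refine Finset.sum_congr rfl fun T hT => ?_
    simp [Finset.prod_mul_distrib]
  have hint : Integrable (fun ω => Real.exp (l * ∑ i, a i * X i ω)) P := by
    have heq : (fun ω => Real.exp (l * ∑ i, a i * X i ω))
        = fun ω => ∑ T ∈ (Finset.univ : Finset (Fin n)).powerset,
            (∏ i ∈ T, c i) * ∏ i ∈ T, X i ω := funext hpt
    rw [heq]
    exact integrable_finset_sum _ fun T _ => (hintprod T).const_mul _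
  have hmgf : ∫ ω, Real.exp (l * ∑ i, a i * X i ω) ∂P ≤ Real.exp (δ * m) := by
    calc ∫ ω, Real.exp (l * ∑ i, a i * X i ω) ∂P
        = ∑ T ∈ (Finset.univ : Finset (Fin n)).powerset,
            (∏ i ∈ T, c i) * ∫ ω, ∏ i ∈ T, X i ω ∂P := by
          simp_rw [hpt]
          rw [integral_finset_sum _ (fun T _ => (hintprod T).const_mul _)]
          exact Finset.sum_congr rfl fun T _ => integral_const_mul _ _
      _ ≤ ∑ T ∈ (Finset.univ : Finset (Fin n)).powerset,
            (∏ i ∈ T, c i) * ∏ i ∈ T, x i := by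
          refine Finset.sum_le_sum fun T _ => ?_
          exact mul_le_mul_of_nonneg_left (hneg T) (Finset.prod_nonneg fun i _ => hcnn i)
      _ = ∏ i, (c i * x i + 1) := by
          rw [Finset.prod_add]
          refine (Finset.sum_congr rfl fun T _ => ?_)
          simp [Finset.prod_mul_distrib]
      _ ≤ ∏ i, Real.exp (δ * (a i * x i)) := by
          refine Finset.prod_le_prod (fun i _ => ?_) (fun i _ => ?_)
          · have := mul_nonneg (hcnn i) (hxnn i); linarith
          · have h1 : c i * x i ≤ δ * (a i * x i) := by
              have h2 := mul_le_mul_of_nonneg_right (hcle i) (hxnn i)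
              nlinarith
            have h2 := Real.add_one_le_exp (δ * (a i * x i))
            linarith
      _ = Real.exp (δ * ∑ i, a i * x i) := by
          rw [Finset.mul_sum, Real.exp_sum]
      _ ≤ Real.exp (δ * m) := Real.exp_le_exp.2 (mul_le_mul_of_nonneg_left hm hδ)
  have hmarkov := ProbabilityTheory.measure_ge_le_exp_mul_mgf
    (X := fun ω => ∑ i, a i * X i ω) (μ := P) ((1 + δ) * m) hlnn hint
  have hmgf' : ProbabilityTheory.mgf (fun ω => ∑ i, a i * X i ω) P l
      = ∫ ω, Real.exp (l * ∑ i, a i * X i ω) ∂P := rfl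
  calc (P {ω | (1 + δ) * m ≤ ∑ i, a i * X i ω}).toReal
      ≤ Real.exp (-l * ((1 + δ) * m)) *
          ProbabilityTheory.mgf (fun ω => ∑ i, a i * X i ω) P l := hmarkov
    _ ≤ Real.exp (-l * ((1 + δ) * m)) * Real.exp (δ * m) := by
        rw [hmgf']
        exact mul_le_mul_of_nonneg_left hmgf (Real.exp_pos _).le
    _ = Real.exp ((δ - l * (1 + δ)) * m) := by
        rw [← Real.exp_add]; ring_nf
    _ = (Real.exp δ / (1 + δ) ^ (1 + δ)) ^ m := by
        have hb : Real.exp δ / (1 + δ) ^ (1 + δ) = Real.exp (δ - l * (1 + δ)) := by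
          rw [Real.rpow_def_of_pos h1δ, ← hl, Real.exp_sub, mul_comm]
        rw [hb, Real.rpow_def_of_pos (Real.exp_pos _), Real.log_exp]
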